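/- In rFPA(alpha) with alpha > 1 and two bidders under uniform bidding, consider an equilibrium. If bidder i satisfies V_i < B_i and there is a query j with v_{i,j} > 0 and 0 < pi_{i,j} < 1, then m_i = 1; in particular b_{i,j'} = v_{i,j'} for every query j'. -/

import Mathlib

open Finset
open scoped Classical

noncomputable section

/-- An allocation: each entry in `[0,1]`, and each query allocated total probability at most 1. -/
def IsAlloc {n q : ℕ} (π : Fin n → Fin q → ℝ) : Prop :=
  (∀ i j, 0 ≤ π i j) ∧ (∀ i j, π i j ≤ 1) ∧ ∀ j, ∑ i, π i j ≤ 1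

/-- An integral (deterministic) allocation. -/
def IsIntegralAlloc {n q : ℕ} (π : Fin n → Fin q → ℝ) : Prop :=
  IsAlloc π ∧ ∀ i j, π i j = 0 ∨ π i j = 1

/-- Liquid welfare of an allocation. -/
def allocLW {n q : ℕ} (B : Fin n → ℝ) (v π : Fin n → Fin q → ℝ) : ℝ :=
  ∑ i, min (B i) (∑ j, π i j * v i j)

/-- Winning probability of a bidder bidding `bi` against an opponent bidding `bo`
in the randomized first-price auction with parameter `α`. -/
def rfpaProb (α bi bo : ℝ) : ℝ :=
  if bi = 0 ∧ bo = 0 then 0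
  else if α * bo ≤ bi then 1
  else if α * bi ≤ bo then 0
  else (1 / 2) * (1 + Real.log (bi / bo) / Real.log α)

/-- Probability that bidder `i` wins query `j` in rFPA(α) with two bidders. -/
def rfpaPi {q : ℕ} (α : ℝ) (b : Fin 2 → Fin q → ℝ) (i : Fin 2) (j : Fin q) : ℝ :=
  rfpaProb α (b i j) (b (i + 1) j)

/-- Expected value of bidder `i` in rFPA(α). -/
def rfpaV {q : ℕ} (α : ℝ) (v b : Fin 2 → Fin q → ℝ) (i : Fin 2) : ℝ :=
  ∑ j, rfpaPi α b i j * v i j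

/-- Expected spend of bidder `i` in rFPA(α). -/
def rfpaSpendI {q : ℕ} (α : ℝ) (b : Fin 2 → Fin q → ℝ) (i : Fin 2) : ℝ :=
  ∑ j, rfpaPi α b i j * b i j

/-- Liquid welfare of a bid profile in rFPA(α). -/
def rfpaLW {q : ℕ} (α : ℝ) (B : Fin 2 → ℝ) (v b : Fin 2 → Fin q → ℝ) : ℝ :=
  ∑ i, min (B i) (rfpaV α v b i)

/-- Undominated (equilibrium) bid profile for rFPA(α) with ROS and budget constraints. -/
def IsRfpaEq {q : ℕ} (α : ℝ) (B : Fin 2 → ℝ) (v b : Fin 2 → Fin q → ℝ) : Prop :=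
  (∀ i j, 0 ≤ b i j) ∧
  (∀ i, rfpaSpendI α b i ≤ min (B i) (rfpaV α v b i)) ∧
  (∀ i (b' : Fin q → ℝ), (∀ j, 0 ≤ b' j) →
    rfpaV α v (Function.update b i b') i ≤ rfpaV α v b i ∨
    min (B i) (rfpaV α v (Function.update b i b') i)
      < rfpaSpendI α (Function.update b i b') i)

/-- The uniform-bidding bid profile induced by multipliers `m`. -/
def uniformBids {n q : ℕ} (v : Fin n → Fin q → ℝ) (m : Fin n → ℝ) : Fin n → Fin q → ℝ :=
  fun i j => m i * v i j

/-- Uniform-bidding equilibrium for rFPA(α): deviations restricted to a different multiplier. -/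
def IsRfpaUniformEq {q : ℕ} (α : ℝ) (B : Fin 2 → ℝ) (v : Fin 2 → Fin q → ℝ)
    (m : Fin 2 → ℝ) : Prop :=
  (∀ i, 0 ≤ m i) ∧
  (∀ i, rfpaSpendI α (uniformBids v m) i ≤ min (B i) (rfpaV α v (uniformBids v m) i)) ∧
  (∀ i (m' : ℝ), 0 ≤ m' →
    rfpaV α v (Function.update (uniformBids v m) i (fun j => m' * v i j)) i
        ≤ rfpaV α v (uniformBids v m) i ∨
    min (B i) (rfpaV α v (Function.update (uniformBids v m) i (fun j => m' * v i j)) i)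
        < rfpaSpendI α (Function.update (uniformBids v m) i (fun j => m' * v i j)) i)

private lemma mylog_le {x y : ℝ} (hx : 0 < x) (h : x ≤ y) : Real.log x ≤ Real.log y := by
  rcases eq_or_lt_of_le h with rfl | h
  · exact le_rfl
  · exact (Real.log_lt_log hx h).le

private lemma clamp_bounds {x y : ℝ} (h : x ≤ y) :
    min 1 (max 0 x) ≤ min 1 (max 0 y) ∧ min 1 (max 0 y) - min 1 (max 0 x) ≤ y - x := by
  constructor
  · exact min_le_min le_rfl (max_le_max le_rfl h)
  · simp only [min_def, max_def]
    split_ifs <;> linarith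

private lemma rfpaProb_mem {α bi bo : ℝ} (hα : 1 < α) (hbi : 0 ≤ bi) (hbo : 0 ≤ bo) :
    0 ≤ rfpaProb α bi bo ∧ rfpaProb α bi bo ≤ 1 := by
  have hlα : 0 < Real.log α := Real.log_pos hα
  have hα0 : (0:ℝ) < α := lt_trans one_pos hα
  unfold rfpaProb
  split_ifs with c1 c2 c3
  · norm_num
  · norm_num
  · norm_num
  · push_neg at c2 c3
    have hbi0 : 0 < bi := by nlinarith
    have hbo0 : 0 < bo := by nlinarith
    have hL1 : Real.log (bi/bo) < Real.log α := by
      apply Real.log_lt_log (by positivity)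
      rw [div_lt_iff₀ hbo0]; nlinarith
    have hL2 : -Real.log α < Real.log (bi/bo) := by
      have h1 : Real.log (bo/bi) < Real.log α := by
        apply Real.log_lt_log (by positivity)
        rw [div_lt_iff₀ hbi0]; nlinarith
      have hrw : Real.log (bo/bi) = - Real.log (bi/bo) := by
        rw [Real.log_div hbo0.ne' hbi0.ne', Real.log_div hbi0.ne' hbo0.ne']; ring
      rw [hrw] at h1; linarith
    constructor
    · have hx : -1 < Real.log (bi/bo) / Real.log α := by
        rw [lt_div_iff₀ hlα]; linarith
      linarith
    · have hx : Real.log (bi/bo) / Real.log α < 1 := by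
        rw [div_lt_iff₀ hlα]; linarith
      linarith

private lemma rfpa_interior {α bi bo : ℝ} (hα : 1 < α) (hbi : 0 ≤ bi) (hbo : 0 ≤ bo)
    (h0 : 0 < rfpaProb α bi bo) (h1 : rfpaProb α bi bo < 1) :
    0 < bi ∧ 0 < bo ∧ bi < α * bo ∧ bo < α * bi := by
  have hα0 : (0:ℝ) < α := lt_trans one_pos hα
  unfold rfpaProb at h0 h1
  split_ifs at h0 h1 with c1 c2 c3
  · exact absurd h0 (lt_irrefl 0)
  · exact absurd h1 (lt_irrefl 1)
  · exact absurd h0 (lt_irrefl 0)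
  · push_neg at c2 c3
    have hbi0 : 0 < bi := by nlinarith
    have hbo0 : 0 < bo := by nlinarith
    exact ⟨hbi0, hbo0, c2, c3⟩

private lemma rfpa_interior_val {α bi bo : ℝ} (hbi : 0 < bi) (hbo : 0 < bo)
    (h2 : bi < α * bo) (h3 : bo < α * bi) :
    rfpaProb α bi bo = (1/2) * (1 + Real.log (bi/bo) / Real.log α) := by
  unfold rfpaProb
  rw [if_neg (fun hc => hbi.ne' hc.1), if_neg (not_le.2 h2), if_neg (not_le.2 h3)]

private lemma rfpa_clamp {α bi bo : ℝ} (hα : 1 < α) (hbi : 0 < bi) (hbo : 0 < bo) :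
    rfpaProb α bi bo
      = min 1 (max 0 ((1/2) * (1 + Real.log (bi/bo) / Real.log α))) := by
  have hlα : 0 < Real.log α := Real.log_pos hα
  unfold rfpaProb
  rw [if_neg (fun hc => hbi.ne' hc.1)]
  by_cases c2 : α * bo ≤ bi
  · rw [if_pos c2]
    have hL : Real.log α ≤ Real.log (bi/bo) :=
      mylog_le (by linarith) ((le_div_iff₀ hbo).2 (by linarith))
    have hf : (1:ℝ) ≤ (1/2) * (1 + Real.log (bi/bo) / Real.log α) := by
      have : (1:ℝ) ≤ Real.log (bi/bo) / Real.log α := (one_le_div hlα).2 hL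
      linarith
    rw [min_eq_left (le_trans hf (le_max_right _ _))]
  · rw [if_neg c2]
    by_cases c3 : α * bi ≤ bo
    · rw [if_pos c3]
      have hL : Real.log (bi/bo) ≤ -Real.log α := by
        have h1 : Real.log α ≤ Real.log (bo/bi) :=
          mylog_le (by linarith) ((le_div_iff₀ hbi).2 (by linarith))
        have hrw : Real.log (bo/bi) = - Real.log (bi/bo) := by
          rw [Real.log_div hbo.ne' hbi.ne', Real.log_div hbi.ne' hbo.ne']; ring
        rw [hrw] at h1; linarith
      have hf : (1/2) * (1 + Real.log (bi/bo) / Real.log α) ≤ 0 := by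
        have : Real.log (bi/bo) / Real.log α ≤ -1 := by
          rw [div_le_iff₀ hlα]; linarith
        linarith
      rw [max_eq_left hf, min_eq_right zero_le_one]
    · rw [if_neg c3]
      push_neg at c2 c3
      have hL1 : Real.log (bi/bo) < Real.log α := by
        apply Real.log_lt_log (by positivity)
        rw [div_lt_iff₀ hbo]; linarith
      have hL2 : -Real.log α < Real.log (bi/bo) := by
        have h1 : Real.log (bo/bi) < Real.log α := by
          apply Real.log_lt_log (by positivity)
          rw [div_lt_iff₀ hbi]; linarith
        have hrw : Real.log (bo/bi) = - Real.log (bi/bo) := by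
          rw [Real.log_div hbo.ne' hbi.ne', Real.log_div hbi.ne' hbo.ne']; ring
        rw [hrw] at h1; linarith
      have hf0 : 0 ≤ (1/2) * (1 + Real.log (bi/bo) / Real.log α) := by
        have : -1 < Real.log (bi/bo) / Real.log α := by rw [lt_div_iff₀ hlα]; linarith
        linarith
      have hf1 : (1/2) * (1 + Real.log (bi/bo) / Real.log α) ≤ 1 := by
        have : Real.log (bi/bo) / Real.log α < 1 := by rw [div_lt_iff₀ hlα]; linarith
        linarith
      rw [max_eq_right hf0, min_eq_right hf1]

private lemma rfpa_mono_bound {α bi bi' bo : ℝ} (hα : 1 < α) (h0 : 0 < bi) (h : bi ≤ bi')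
    (hbo : 0 ≤ bo) :
    rfpaProb α bi bo ≤ rfpaProb α bi' bo ∧
    rfpaProb α bi' bo - rfpaProb α bi bo ≤ (1/2) * (Real.log (bi'/bi) / Real.log α) := by
  have hlα : 0 < Real.log α := Real.log_pos hα
  have h0' : 0 < bi' := lt_of_lt_of_le h0 h
  have hlognn : 0 ≤ Real.log (bi'/bi) := Real.log_nonneg ((one_le_div h0).2 h)
  have hRHS : 0 ≤ (1/2) * (Real.log (bi'/bi) / Real.log α) := by positivity
  rcases hbo.eq_or_lt with h' | hbo0
  · have h'' : bo = 0 := h'.symm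
    subst h''
    have e1 : rfpaProb α bi 0 = 1 := by
      unfold rfpaProb
      rw [if_neg (fun hc => h0.ne' hc.1), if_pos (by rw [mul_zero]; exact h0.le)]
    have e2 : rfpaProb α bi' 0 = 1 := by
      unfold rfpaProb
      rw [if_neg (fun hc => h0'.ne' hc.1), if_pos (by rw [mul_zero]; exact h0'.le)]
    rw [e1, e2]
    exact ⟨le_rfl, by linarith⟩
  · rw [rfpa_clamp hα h0 hbo0, rfpa_clamp hα h0' hbo0]
    have hxy : (1/2) * (1 + Real.log (bi/bo) / Real.log α)
        ≤ (1/2) * (1 + Real.log (bi'/bo) / Real.log α) := by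
      have hL : Real.log (bi/bo) ≤ Real.log (bi'/bo) :=
        mylog_le (by positivity) (by gcongr)
      gcongr
    obtain ⟨hc1, hc2⟩ := clamp_bounds hxy
    have e : Real.log (bi'/bo) - Real.log (bi/bo) = Real.log (bi'/bi) := by
      rw [Real.log_div h0'.ne' hbo0.ne', Real.log_div h0.ne' hbo0.ne',
        Real.log_div h0'.ne' h0.ne']
      ring
    have hd : (1/2) * (1 + Real.log (bi'/bo) / Real.log α)
        - (1/2) * (1 + Real.log (bi/bo) / Real.log α)
        = (1/2) * (Real.log (bi'/bi) / Real.log α) := by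
      field_simp
      linarith [e]
    exact ⟨hc1, by linarith⟩

set_option maxHeartbeats 2000000 in
/-- in rFPA(α) with `α > 1`, two bidders and uniform bidding, in every
equilibrium: if `V i < B i` and some query `j` has `v i j > 0` and `0 < π i j < 1`, then
`m i = 1`; in particular bidder `i` bids their value everywhere. -/
theorem stmt16 (q : ℕ) (α : ℝ) (hα : 1 < α) (B : Fin 2 → ℝ) (v : Fin 2 → Fin q → ℝ)
    (hB : ∀ i, 0 < B i) (hv : ∀ i j, 0 ≤ v i j)
    (m : Fin 2 → ℝ) (hm : IsRfpaUniformEq α B v m)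
    (i : Fin 2) (hV : rfpaV α v (uniformBids v m) i < B i)
    (j : Fin q) (hvj : 0 < v i j)
    (h0 : 0 < rfpaPi α (uniformBids v m) i j)
    (h1 : rfpaPi α (uniformBids v m) i j < 1) :
    m i = 1 ∧ ∀ j', uniformBids v m i j' = v i j' := by
  obtain ⟨hm0, hm1, hm2⟩ := hm
  have hlα : 0 < Real.log α := Real.log_pos hα
  have hα0 : (0:ℝ) < α := lt_trans one_pos hα
  have hne : i + 1 ≠ i := by
    intro h
    have h' := congrArg Fin.val h
    simp [Fin.val_add] at h'
    omega
  have hbnn : ∀ k j', (0:ℝ) ≤ uniformBids v m k j' := fun k j' => mul_nonneg (hm0 k) (hv k j')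
  -- opaque opponent bids
  obtain ⟨w, hw⟩ : ∃ w : Fin q → ℝ, ∀ j', w j' = uniformBids v m (i+1) j' :=
    ⟨_, fun _ => rfl⟩
  have hwnn : ∀ j', 0 ≤ w j' := fun j' => (hw j') ▸ hbnn (i+1) j'
  -- opaque winning probabilities
  obtain ⟨P, hP⟩ : ∃ P : Fin q → ℝ, ∀ j', P j' = rfpaProb α (m i * v i j') (w j') :=
    ⟨_, fun _ => rfl⟩
  have hPpi : ∀ j', rfpaPi α (uniformBids v m) i j' = P j' := by
    intro j'
    rw [hP j', hw j']
    rfl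
  -- opaque value
  obtain ⟨V, hV4⟩ : ∃ x, x = rfpaV α v (uniformBids v m) i := ⟨_, rfl⟩
  have hVsum : V = ∑ j', P j' * v i j' := by
    rw [hV4]
    exact Finset.sum_congr rfl fun j' _ => by rw [hPpi j']
  rw [← hV4] at hV
  rw [hPpi j] at h0 h1
  -- interior conditions at query j
  have h0' : 0 < rfpaProb α (m i * v i j) (w j) := by rw [← hP j]; exact h0
  have h1' : rfpaProb α (m i * v i j) (w j) < 1 := by rw [← hP j]; exact h1
  obtain ⟨hbi, hbo, h2, h3⟩ :=
    rfpa_interior hα (mul_nonneg (hm0 i) (hv i j)) (hwnn j) h0' h1'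
  have hmi : 0 < m i := by
    rcases mul_pos_iff.mp hbi with ⟨h', _⟩ | ⟨_, h'⟩
    · exact h'
    · linarith
  have hπnn : ∀ j', 0 ≤ P j' := by
    intro j'
    rw [hP j']
    exact (rfpaProb_mem hα (mul_nonneg (hm0 i) (hv i j')) (hwnn j')).1
  have hV0 : 0 < V := by
    rw [hVsum]
    refine lt_of_lt_of_le (mul_pos h0 hvj) ?_
    exact Finset.single_le_sum (fun j' _ => mul_nonneg (hπnn j') (hv i j')) (Finset.mem_univ j)
  have hspend : rfpaSpendI α (uniformBids v m) i = m i * V := by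
    rw [hVsum, Finset.mul_sum]
    refine Finset.sum_congr rfl fun j' _ => ?_
    rw [hPpi j']
    show P j' * (m i * v i j') = m i * (P j' * v i j')
    ring
  have hmle1 : m i ≤ 1 := by
    have h := hm1 i
    rw [hspend, ← hV4] at h
    have h' := min_le_right (B i) V
    nlinarith
  have hmi1 : m i = 1 := by
    by_contra hne1
    have hmlt : m i < 1 := lt_of_le_of_ne hmle1 hne1
    obtain ⟨S, hS⟩ : ∃ x : ℝ, x = (∑ j', v i j') + 1 := ⟨_, rfl⟩
    have hsumnn : 0 ≤ ∑ j', v i j' := Finset.sum_nonneg (fun j' _ => hv i j')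
    have hS0 : 0 < S := by rw [hS]; linarith
    obtain ⟨ε, hε⟩ : ∃ x : ℝ, x = B i - V := ⟨_, rfl⟩
    have hε0 : 0 < ε := by rw [hε]; linarith
    obtain ⟨c, hc⟩ : ∃ x : ℝ, x = α * w j / v i j := ⟨_, rfl⟩
    have hmc : m i < c := by rw [hc, lt_div_iff₀ hvj]; linarith
    obtain ⟨t, ht⟩ : ∃ x : ℝ, x = ε * Real.log α / S := ⟨_, rfl⟩
    have ht0 : 0 < t := by rw [ht]; positivity
    obtain ⟨m', hm'⟩ : ∃ x : ℝ, x = min 1 (min ((m i + c)/2) (m i * Real.exp t)) := ⟨_, rfl⟩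
    have hexp : 1 < Real.exp t := by
      have := Real.add_one_le_exp t
      linarith
    have hm'gt : m i < m' := by
      rw [hm']
      refine lt_min hmlt (lt_min (by linarith) ?_)
      nlinarith
    have hm'le1 : m' ≤ 1 := by rw [hm']; exact min_le_left _ _
    have hm'pos : 0 < m' := lt_trans hmi hm'gt
    have hm'c : m' < c := by
      rw [hm']
      exact lt_of_le_of_lt (le_trans (min_le_right _ _) (min_le_left _ _)) (by linarith)
    have hlog : Real.log (m' / m i) ≤ t := by
      have hle : m' ≤ m i * Real.exp t := by
        rw [hm']; exact le_trans (min_le_right _ _) (min_le_right _ _)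
      have hdiv : m' / m i ≤ Real.exp t := by
        rw [div_le_iff₀ hmi]; linarith
      calc Real.log (m' / m i) ≤ Real.log (Real.exp t) := mylog_le (by positivity) hdiv
        _ = t := Real.log_exp t
    have hlogpos : 0 < Real.log (m' / m i) := Real.log_pos ((one_lt_div hmi).2 hm'gt)
    obtain ⟨Δ, hΔ⟩ : ∃ x : ℝ, x = (1/2) * (Real.log (m' / m i) / Real.log α) := ⟨_, rfl⟩
    have hΔ0 : 0 < Δ := by rw [hΔ]; positivity
    obtain ⟨P', hP'⟩ : ∃ f : Fin q → ℝ, ∀ j', f j' = rfpaProb α (m' * v i j') (w j') :=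
      ⟨_, fun _ => rfl⟩
    have key : ∀ j', P j' ≤ P' j' ∧ P' j' - P j' ≤ Δ := by
      intro j'
      rcases (hv i j').eq_or_lt with hv0 | hv0
      · have e : P' j' = P j' := by
          rw [hP' j', hP j', ← hv0, mul_zero, mul_zero]
        rw [e]
        exact ⟨le_rfl, by linarith⟩
      · have hb1 : 0 < m i * v i j' := mul_pos hmi hv0
        have hble : m i * v i j' ≤ m' * v i j' := by nlinarith
        obtain ⟨hmono, hbd⟩ := rfpa_mono_bound hα hb1 hble (hwnn j')
        have hratio : (m' * v i j') / (m i * v i j') = m' / m i := by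
          rw [mul_comm m' (v i j'), mul_comm (m i) (v i j'),
            mul_div_mul_left _ _ hv0.ne']
        rw [hratio] at hbd
        rw [hP j', hP' j', hΔ]
        exact ⟨hmono, hbd⟩
    -- the deviated profile
    have hVup : rfpaV α v (Function.update (uniformBids v m) i (fun j'' => m' * v i j'')) i
        = ∑ j', P' j' * v i j' := by
      refine Finset.sum_congr rfl fun j' _ => ?_
      rw [hP' j', hw j']
      simp only [rfpaPi, Function.update_self, Function.update_of_ne hne]
    have hspend' : rfpaSpendI α (Function.update (uniformBids v m) i (fun j'' => m' * v i j'')) i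
        = m' * ∑ j', P' j' * v i j' := by
      rw [Finset.mul_sum]
      refine Finset.sum_congr rfl fun j' _ => ?_
      rw [hP' j', hw j']
      simp only [rfpaPi, Function.update_self, Function.update_of_ne hne]
      ring
    -- upper bound on the new value
    have hsum_eq : ∑ j', v i j' = S - 1 := by rw [hS]; ring
    have hub : ∑ j', P' j' * v i j' ≤ V + Δ * (S - 1) := by
      have hstep : ∀ j' ∈ Finset.univ, P' j' * v i j' ≤ P j' * v i j' + Δ * v i j' := by
        intro j' _
        have hk := (key j').2
        nlinarith [hv i j']
      calc ∑ j', P' j' * v i j'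
          ≤ ∑ j', (P j' * v i j' + Δ * v i j') := Finset.sum_le_sum hstep
        _ = V + Δ * (S - 1) := by
            rw [Finset.sum_add_distrib, ← Finset.mul_sum, hsum_eq, hVsum]
    have hΔle : Δ ≤ ε / (2 * S) := by
      have h1 : Real.log (m' / m i) / Real.log α ≤ t / Real.log α := by gcongr
      have h2 : t / Real.log α = ε / S := by
        rw [ht, div_div, mul_comm S (Real.log α), ← div_div, mul_div_assoc,
          div_self hlα.ne', mul_one]
      rw [h2] at h1
      rw [hΔ, show ε / (2 * S) = (1/2) * (ε / S) by ring]
      linarith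
    have hVlt : ∑ j', P' j' * v i j' < B i := by
      have hΔS : Δ * (2 * S) ≤ ε := by
        have := (le_div_iff₀ (by positivity : (0:ℝ) < 2 * S)).1 hΔle
        linarith
      have hDS : Δ * (S - 1) < ε := by nlinarith
      have := hub
      rw [hε] at hDS
      linarith
    -- strict increase at query j
    have h2' : m' * v i j < α * w j := by
      rw [hc] at hm'c
      have := (lt_div_iff₀ hvj).1 hm'c
      linarith
    have h3' : w j < α * (m' * v i j) := by nlinarith
    have hjold : P j = (1/2) * (1 + Real.log ((m i * v i j)/(w j)) / Real.log α) := by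
      rw [hP j]; exact rfpa_interior_val hbi hbo h2 h3
    have hjnew : P' j = (1/2) * (1 + Real.log ((m' * v i j)/(w j)) / Real.log α) := by
      rw [hP' j]; exact rfpa_interior_val (mul_pos hm'pos hvj) hbo h2' h3'
    have hlogdiff : Real.log ((m' * v i j)/(w j)) - Real.log ((m i * v i j)/(w j))
        = Real.log (m' / m i) := by
      rw [Real.log_div (mul_pos hm'pos hvj).ne' hbo.ne',
        Real.log_div (mul_pos hmi hvj).ne' hbo.ne',
        Real.log_mul hm'pos.ne' hvj.ne', Real.log_mul hmi.ne' hvj.ne',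
        Real.log_div hm'pos.ne' hmi.ne']
      ring
    have hdiffj : P' j - P j = Δ := by
      rw [hjnew, hjold, hΔ]
      field_simp
      rw [mul_comm (v i j) (m i)]
      linarith [hlogdiff]
    have hVgt : V < ∑ j', P' j' * v i j' := by
      rw [hVsum]
      refine Finset.sum_lt_sum (fun j' _ => mul_le_mul_of_nonneg_right (key j').1 (hv i j'))
        ⟨j, Finset.mem_univ j, ?_⟩
      have hlt : P j < P' j := by linarith
      exact mul_lt_mul_of_pos_right hlt hvj
    rcases hm2 i m' hm'pos.le with hdev | hdev
    · rw [hVup, ← hV4] at hdev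
      exact absurd hVgt (not_lt.2 hdev)
    · rw [hVup, hspend'] at hdev
      have hV'pos : 0 < ∑ j', P' j' * v i j' := lt_trans hV0 hVgt
      have ha : m' * ∑ j', P' j' * v i j' ≤ ∑ j', P' j' * v i j' :=
        mul_le_of_le_one_left hV'pos.le hm'le1
      have hb' : m' * ∑ j', P' j' * v i j' ≤ B i := le_trans ha hVlt.le
      exact absurd hdev (not_lt.2 (le_min hb' ha))
  refine ⟨hmi1, fun j' => ?_⟩
  simp [uniformBids, hmi1]
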